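/- Let C = |x|² I + a t J and D = x x^t on ℝ^{2n}, with J the standard symplectic matrix. Then det(C + 2D) = (|x|⁴ + a²t²)^{n−1}(3|x|⁴ + a²t²). -/

import Mathlib

open Matrix

section aux
variable (n : ℕ)

local notation "Jm" => (Matrix.fromBlocks 0 1 (-1) 0 : Matrix (Fin n ⊕ Fin n) (Fin n ⊕ Fin n) ℝ)

theorem auxJJ : Jm * Jm = -1 := by
  rw [fromBlocks_multiply]
  simp [← fromBlocks_one, fromBlocks_neg]

theorem auxdetJ : (Jm).det = 1 := by
  have h : Jm = fromBlocks 1 1 0 1 * fromBlocks 1 0 (-1) 1 * fromBlocks 1 1 0 1 := by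
    rw [fromBlocks_multiply, fromBlocks_multiply]
    norm_num
  rw [h, det_mul, det_mul, det_fromBlocks_zero₂₁, det_fromBlocks_zero₁₂]
  simp

theorem auxdetC (s w : ℝ) (hk : s ^ 2 + w ^ 2 ≠ 0) :
    (s • (1 : Matrix (Fin n ⊕ Fin n) (Fin n ⊕ Fin n) ℝ) + w • Jm).det = (s ^ 2 + w ^ 2) ^ n := by
  have hC : s • (1 : Matrix (Fin n ⊕ Fin n) (Fin n ⊕ Fin n) ℝ) + w • Jm
      = fromBlocks (s • 1) (w • 1) ((-w) • 1) (s • 1) := by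
    rw [← fromBlocks_one, fromBlocks_smul, fromBlocks_smul, fromBlocks_add]
    congr 1 <;> simp
  rw [hC]
  rcases eq_or_ne s 0 with hs | hs
  · -- then w ≠ 0
    have hw : w ≠ 0 := by
      intro hw; exact hk (by rw [hs, hw]; ring)
    subst hs
    have h2 : fromBlocks ((0:ℝ) • (1 : Matrix (Fin n) (Fin n) ℝ)) (w • 1) ((-w) • 1) ((0:ℝ) • 1)
        = w • Jm := by
      rw [fromBlocks_smul]
      congr 1 <;> simp
    rw [h2, det_smul, auxdetJ, mul_one]
    simp only [Fintype.card_sum, Fintype.card_fin]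
    ring
  · haveI : Invertible (s • (1 : Matrix (Fin n) (Fin n) ℝ)) :=
      invertibleOfRightInverse _ (s⁻¹ • 1) (by
        rw [smul_mul_smul_comm, mul_one, mul_inv_cancel₀ hs, one_smul])
    rw [det_fromBlocks₂₂]
    rw [invOf_eq_right_inv (by
      rw [smul_mul_smul_comm, mul_one, mul_inv_cancel₀ hs, one_smul] :
        s • (1 : Matrix (Fin n) (Fin n) ℝ) * s⁻¹ • 1 = 1)]
    have : (s • (1 : Matrix (Fin n) (Fin n) ℝ)) - w • 1 * s⁻¹ • 1 * (-w) • 1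
        = ((s ^ 2 + w ^ 2) / s) • 1 := by
      rw [smul_mul_smul_comm, mul_one, smul_mul_smul_comm, mul_one, ← sub_smul]
      congr 1
      field_simp
      ring
    rw [this, det_smul, det_smul]
    simp only [det_one, mul_one, Fintype.card_fin]
    rw [← mul_pow]; congr 1
    field_simp

end aux

section aux2
variable (n : ℕ)
local notation "Jm" => (Matrix.fromBlocks 0 1 (-1) 0 : Matrix (Fin n ⊕ Fin n) (Fin n ⊕ Fin n) ℝ)

theorem auxCB (s w : ℝ) (hk : s ^ 2 + w ^ 2 ≠ 0) :
    (s • (1 : Matrix (Fin n ⊕ Fin n) (Fin n ⊕ Fin n) ℝ) + w • Jm) *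
      ((s ^ 2 + w ^ 2)⁻¹ • (s • (1 : Matrix (Fin n ⊕ Fin n) (Fin n ⊕ Fin n) ℝ) - w • Jm)) = 1 := by
  rw [Matrix.mul_smul]
  have h : (s • (1 : Matrix (Fin n ⊕ Fin n) (Fin n ⊕ Fin n) ℝ) + w • Jm) *
      (s • (1 : Matrix (Fin n ⊕ Fin n) (Fin n ⊕ Fin n) ℝ) - w • Jm) = (s ^ 2 + w ^ 2) • 1 := by
    simp only [Matrix.add_mul, Matrix.mul_sub, smul_mul_smul_comm, Matrix.mul_one,
      Matrix.one_mul, auxJJ, smul_neg, sub_neg_eq_add]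
    module
  rw [h, smul_smul, inv_mul_cancel₀ hk, one_smul]

theorem auxJx (x : (Fin n ⊕ Fin n) → ℝ) :
    Jm *ᵥ x = Sum.elim (fun i => x (Sum.inr i)) (fun i => -(x (Sum.inl i))) := by
  have hx : x = Sum.elim (x ∘ Sum.inl) (x ∘ Sum.inr) := by
    ext i; cases i <;> rfl
  rw [hx, fromBlocks_mulVec]
  simp [Matrix.zero_mulVec, Matrix.one_mulVec, Matrix.neg_mulVec]
  rfl

theorem auxxJx (x : (Fin n ⊕ Fin n) → ℝ) : x ⬝ᵥ (Jm *ᵥ x) = 0 := by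
  rw [auxJx]
  have hx : x = Sum.elim (x ∘ Sum.inl) (x ∘ Sum.inr) := by
    ext i; cases i <;> rfl
  nth_rewrite 1 [hx]
  rw [sumElim_dotProduct_sumElim]
  simp [dotProduct, mul_comm, ← Finset.sum_add_distrib]

theorem auxrowcol (m : Type*) [Fintype m] (v u : m → ℝ) (B : Matrix m m ℝ) :
    (Matrix.replicateRow (Fin 1) v * B * Matrix.replicateCol (Fin 1) u) 0 0 = v ⬝ᵥ (B *ᵥ u) := by
  simp only [Matrix.mul_apply, Matrix.replicateRow_apply, Matrix.replicateCol_apply, dotProduct,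
    Matrix.mulVec, Finset.sum_mul, Finset.mul_sum, mul_assoc]
  rw [Finset.sum_comm]

end aux2

theorem stmt10 (n : ℕ) (hn : 1 ≤ n) (x : (Fin n ⊕ Fin n) → ℝ) (t a : ℝ)
    (hxt : x ≠ 0 ∨ t ≠ 0) :
    let J : Matrix (Fin n ⊕ Fin n) (Fin n ⊕ Fin n) ℝ := Matrix.fromBlocks 0 1 (-1) 0
    let C : Matrix (Fin n ⊕ Fin n) (Fin n ⊕ Fin n) ℝ := (∑ i, x i ^ 2) • (1 : Matrix _ _ ℝ) + (a * t) • J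
    let D : Matrix (Fin n ⊕ Fin n) (Fin n ⊕ Fin n) ℝ := Matrix.vecMulVec x x
    (C + 2 • D).det
      = ((∑ i, x i ^ 2) ^ 2 + a ^ 2 * t ^ 2) ^ (n - 1) *
          (3 * (∑ i, x i ^ 2) ^ 2 + a ^ 2 * t ^ 2) := by
  intro J C D
  set s : ℝ := ∑ i, x i ^ 2 with hs
  set w : ℝ := a * t with hw
  have hw2 : a ^ 2 * t ^ 2 = w ^ 2 := by rw [hw]; ring
  by_cases hk : s ^ 2 + w ^ 2 = 0
  · -- degenerate case: everything vanishes
    have h1 : s ^ 2 = 0 ∧ w ^ 2 = 0 :=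
      (add_eq_zero_iff_of_nonneg (sq_nonneg _) (sq_nonneg _)).mp hk
    have hs0 : s = 0 := by
      have := h1.1; exact pow_eq_zero_iff (by norm_num) |>.mp this
    have hw0 : w = 0 := by
      have := h1.2; exact pow_eq_zero_iff (by norm_num) |>.mp this
    have hx0 : x = 0 := by
      funext i
      have hnn : ∀ j ∈ Finset.univ, (0:ℝ) ≤ x j ^ 2 := fun j _ => sq_nonneg _
      have h := (Finset.sum_eq_zero_iff_of_nonneg hnn).mp (by rw [← hs]; exact hs0) i
        (Finset.mem_univ i)
      exact pow_eq_zero_iff (by norm_num) |>.mp h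
    have hM : C + 2 • D = 0 := by
      have hD0 : D = 0 := by
        ext i j
        simp [D, hx0, Matrix.vecMulVec_apply]
      have hC0 : C = 0 := by
        rw [show C = s • (1 : Matrix (Fin n ⊕ Fin n) (Fin n ⊕ Fin n) ℝ) + w • J from rfl,
          hs0, hw0]
        simp
      rw [hD0, hC0]
      simp
    haveI : Nonempty (Fin n ⊕ Fin n) := ⟨Sum.inl ⟨0, hn⟩⟩
    rw [hM, Matrix.det_zero, hw2, hw0, hs0]
    norm_num
  · -- main case
    have hdetC : C.det = (s ^ 2 + w ^ 2) ^ n := auxdetC n s w hk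
    have hCB := auxCB n s w hk
    have hdet : IsUnit C.det :=
      IsUnit.of_mul_eq_one _ (by rw [← det_mul, hCB, det_one])
    have hCinv : C⁻¹ = (s ^ 2 + w ^ 2)⁻¹ • (s • 1 - w • J) := inv_eq_right_inv hCB
    have h2D : (2 : ℕ) • D = Matrix.replicateCol (Fin 1) x * Matrix.replicateRow (Fin 1) (fun i => 2 * x i) := by
      rw [show Matrix.replicateCol (Fin 1) x * Matrix.replicateRow (Fin 1) (fun i => 2 * x i)
          = Matrix.vecMulVec x (fun i => 2 * x i) from (vecMulVec_eq (Fin 1) _ _).symm]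
      ext i j
      simp [D, Matrix.vecMulVec_apply]
      ring
    rw [h2D, det_add_mul _ _ hdet, hCinv]
    have hinner : ((1 : Matrix (Fin 1) (Fin 1) ℝ) +
        Matrix.replicateRow (Fin 1) (fun i => 2 * x i) * ((s ^ 2 + w ^ 2)⁻¹ • (s • 1 - w • J)) *
          Matrix.replicateCol (Fin 1) x).det
        = 1 + 2 * s ^ 2 * (s ^ 2 + w ^ 2)⁻¹ := by
      rw [det_unique, Matrix.add_apply, Matrix.one_apply_eq]
      rw [show (default : Fin 1) = 0 from rfl]
      rw [auxrowcol]
      have hv : (fun i => 2 * x i) = (2 : ℝ) • x := by funext i; simp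
      rw [hv, smul_dotProduct]
      have hVec : ((s ^ 2 + w ^ 2)⁻¹ • (s • (1 : Matrix (Fin n ⊕ Fin n) (Fin n ⊕ Fin n) ℝ)
          - w • J)) *ᵥ x = (s ^ 2 + w ^ 2)⁻¹ • (s • x - w • (J *ᵥ x)) := by
        rw [smul_mulVec, sub_mulVec, smul_mulVec, smul_mulVec, one_mulVec]
      rw [hVec]
      rw [dotProduct_smul, dotProduct_sub, dotProduct_smul, dotProduct_smul, auxxJx]
      have hxx : x ⬝ᵥ x = s := by simp [dotProduct, hs, sq]
      rw [hxx]
      simp only [smul_eq_mul, smul_zero, sub_zero, mul_zero]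
      ring
    rw [hinner, hdetC, hw2]
    obtain ⟨m, rfl⟩ : ∃ m, n = m + 1 := ⟨n - 1, (Nat.succ_pred_eq_of_pos hn).symm⟩
    simp only [Nat.add_sub_cancel]
    rw [pow_succ]
    field_simp
    ring
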